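/- Let w: ℝ → [0,∞) be integrable with ∫_ℝ w(p) dp = 1, w even (w(p) = w(−p)), ∫_ℝ |p| w(p) dp < ∞, and suppose N(p) := ∑_{n∈ℤ} w(p−n) satisfies 0 < N(p) < ∞ for every p. Then the coherent-state quantisation of the momentum function f(p,q) = p is the number operator: for all m, n ∈ ℤ, ∫_ℝ ∫₀^{2π} p · ⟨e_m|p,q⟩ · conj(⟨e_n|p,q⟩) · N(p) dp dq/(2π) = n δ_{mn}. -/

import Mathlib

open Real MeasureTheory

/-- `N(p) = ∑_{n∈ℤ} w(p−n)`. -/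
noncomputable def Nw (w : ℝ → ℝ) (p : ℝ) : ℝ := ∑' n : ℤ, w (p - n)

/-- The components of the circle coherent state:
`⟨e_n|p,q⟩ = N(p)^{−1/2} √(w(p−n)) e^{−inq}`. -/
noncomputable def csC (w : ℝ → ℝ) (p q : ℝ) (n : ℤ) : ℂ :=
  ((Real.sqrt (Nw w p))⁻¹ * Real.sqrt (w (p - n)) : ℝ) *
    Complex.exp (-Complex.I * n * q)

lemma aux_exp_int (k : ℤ) :
    (∫ q in (0:ℝ)..(2 * π), Complex.exp (Complex.I * (k : ℂ) * q)) =
      if k = 0 then ((2 * π : ℝ) : ℂ) else 0 := by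
  by_cases hk : k = 0
  · simp [hk]
  · have hc : (Complex.I * (k : ℂ)) ≠ 0 := by
      refine mul_ne_zero Complex.I_ne_zero ?_
      exact_mod_cast hk
    have h := integral_exp_mul_complex (a := 0) (b := 2 * π) hc
    simp only [mul_assoc] at h ⊢
    rw [h]
    push_cast
    rw [show Complex.I * ((k : ℂ) * (2 * (π:ℂ))) = (k : ℂ) * (2 * (π:ℂ) * Complex.I) by ring,
      Complex.exp_int_mul_two_pi_mul_I]
    simp [hk]

/-- For an even probability density `w` with finite first absolute moment, the
coherent-state quantisation of the momentum function `f(p,q) = p` is the number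
operator: for all `m, n ∈ ℤ`,
`∫_ℝ ∫₀^{2π} p ⟨e_m|p,q⟩ conj(⟨e_n|p,q⟩) N(p) dp dq/(2π) = n δ_{mn}`. -/
theorem circle_CS_quantisation_of_momentum
    (w : ℝ → ℝ) (hw0 : ∀ p, 0 ≤ w p) (hwint : Integrable w)
    (hw1 : (∫ p : ℝ, w p) = 1)
    (hweven : ∀ p, w (-p) = w p)
    (hwmom : Integrable fun p : ℝ => |p| * w p)
    (hsum : ∀ p : ℝ, Summable fun n : ℤ => w (p - n))
    (hNpos : ∀ p : ℝ, 0 < Nw w p) :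
    ∀ m n : ℤ,
      (∫ p : ℝ, ∫ q in (0:ℝ)..(2 * π),
          (p : ℂ) * csC w p q m * star (csC w p q n) * (Nw w p : ℝ) / (2 * π : ℝ)) =
        if m = n then (n : ℂ) else 0 := by
  intro m n
  have hπ : (2 * π : ℝ) ≠ 0 := by positivity
  -- the inner integral, pointwise in p
  have key : ∀ p : ℝ,
      (∫ q in (0:ℝ)..(2 * π),
          (p : ℂ) * csC w p q m * star (csC w p q n) * (Nw w p : ℝ) / (2 * π : ℝ)) =
        if m = n then ((p * w (p - n) : ℝ) : ℂ) else 0 := by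
    intro p
    have hN := hNpos p
    have hsN : Real.sqrt (Nw w p) ≠ 0 := by positivity
    set C : ℂ :=
      ((p * ((Real.sqrt (Nw w p))⁻¹ * Real.sqrt (w (p - m))) *
        ((Real.sqrt (Nw w p))⁻¹ * Real.sqrt (w (p - n))) * Nw w p / (2 * π) : ℝ) : ℂ) with hC
    have hpoint : ∀ q : ℝ,
        (p : ℂ) * csC w p q m * star (csC w p q n) * (Nw w p : ℝ) / (2 * π : ℝ) =
          C * Complex.exp (Complex.I * ((n - m : ℤ) : ℂ) * q) := by
      intro q
      have hstar : star (csC w p q n) =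
          (((Real.sqrt (Nw w p))⁻¹ * Real.sqrt (w (p - n)) : ℝ) : ℂ) *
            Complex.exp (Complex.I * n * q) := by
        unfold csC
        rw [star_mul']
        congr 1
        · rw [Complex.star_def, Complex.conj_ofReal]
        · rw [Complex.star_def, ← Complex.exp_conj]
          congr 1
          simp [Complex.conj_I]
      rw [hstar]
      unfold csC
      rw [show Complex.exp (Complex.I * ((n - m : ℤ) : ℂ) * q)
            = Complex.exp (-Complex.I * m * q) * Complex.exp (Complex.I * n * q) by
        rw [← Complex.exp_add]; congr 1; push_cast; ring]
      rw [hC]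
      push_cast
      ring
    simp only [hpoint]
    rw [intervalIntegral.integral_const_mul, aux_exp_int]
    by_cases hmn : m = n
    · subst hmn
      rw [show m - m = 0 from sub_self m, if_pos rfl, if_pos rfl]
      rw [hC]
      have hsq : Real.sqrt (w (p - m)) * Real.sqrt (w (p - m)) = w (p - m) :=
        Real.mul_self_sqrt (hw0 _)
      have hNsq : Real.sqrt (Nw w p) * Real.sqrt (Nw w p) = Nw w p :=
        Real.mul_self_sqrt hN.le
      rw [← Complex.ofReal_mul]
      congr 1
      field_simp
      linear_combination p * Nw w p * hsq - p * w (p - m) * hNsq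
    · have : n - m ≠ 0 := by omega
      simp [this, hmn]
  rw [show (fun p : ℝ => ∫ q in (0:ℝ)..(2 * π),
        (p : ℂ) * csC w p q m * star (csC w p q n) * (Nw w p : ℝ) / (2 * π : ℝ)) =
      fun p : ℝ => if m = n then ((p * w (p - n) : ℝ) : ℂ) else 0 from funext key]
  by_cases hmn : m = n
  · simp only [if_pos hmn]
    rw [show (∫ p : ℝ, ((p * w (p - n) : ℝ) : ℂ)) = ((∫ p : ℝ, p * w (p - n) : ℝ) : ℂ)
      from integral_ofReal]
    -- real computation
    have hmes : AEStronglyMeasurable (fun u : ℝ => u * w u) volume :=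
      aestronglyMeasurable_id.mul hwint.aestronglyMeasurable
    have hint1 : Integrable (fun u : ℝ => u * w u) := by
      refine hwmom.mono' hmes ?_
      filter_upwards with u
      rw [Real.norm_eq_abs, abs_mul, abs_of_nonneg (hw0 u)]
    have hzero : (∫ u : ℝ, u * w u) = 0 := by
      have h := integral_neg_eq_self (fun u => u * w u) (volume : Measure ℝ)
      simp only [hweven, neg_mul] at h
      rw [integral_neg] at h
      linarith
    have hshift : (∫ p : ℝ, p * w (p - n)) = ∫ u : ℝ, (u + n) * w u := by
      rw [← integral_add_right_eq_self (fun x : ℝ => x * w (x - n)) (n : ℝ)]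
      simp
    have hval : (∫ p : ℝ, p * w (p - n)) = (n : ℝ) := by
      rw [hshift]
      have : (fun u : ℝ => (u + n) * w u) = fun u : ℝ => u * w u + (n : ℝ) * w u := by
        funext u; ring
      rw [this, integral_add hint1 (hwint.const_mul _), hzero, integral_const_mul, hw1]
      ring
    rw [hval]
    norm_cast
  · simp [hmn]
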